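/- Assume (g1) and (g3) for the numerical Hamiltonian g. Let ψ : (0,∞) → ℝ be nondecreasing, concave and differentiable. Then for any grid function v, any grid function m with m_{i,j} > 0 for all i,j, and any η > 0: Σ_{i,j} 𝒯_{i,j}(v, m) ψ(m_{i,j}) ≤ (η/2) Σ_{i,j} [∇_h ψ(m)]_{i,j} · [∇_h m]_{i,j} + (1/(2η)) Σ_{i,j} m_{i,j}² ψ′(m_{i,j}) [ (g_{q₁}(x_{i,j},[∇_h v]_{i,j}))² 𝟙_{m_{i+1,j} > m_{i,j}} + (g_{q₂}(x_{i,j},[∇_h v]_{i,j}))² 𝟙_{m_{i−1,j} > m_{i,j}} + (g_{q₃}(x_{i,j},[∇_h v]_{i,j}))² 𝟙_{m_{i,j+1} > m_{i,j}} + (g_{q₄}(x_{i,j},[∇_h v]_{i,j}))² 𝟙_{m_{i,j−1} > m_{i,j}} ], where ψ(m) denotes the grid function (ψ(m_{i,j}))_{i,j} and 𝟙_A equals 1 if condition A holds and 0 otherwise. -/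

import Mathlib

open Finset

noncomputable section

abbrev Torus : Type := AddCircle (1:ℝ) × AddCircle (1:ℝ)

/-- The grid step `h = 1/N_h`. -/
def gridh (N : ℕ) : ℝ := 1 / N

/-- The grid point `x_{i,j} = (ih, jh)` on the torus. -/
def gridPt (N : ℕ) (i j : ZMod N) : Torus :=
  (((i.val : ℝ) * gridh N : ℝ), ((j.val : ℝ) * gridh N : ℝ))

/-- Forward difference in the first direction. -/
def D1 {N : ℕ} (v : ZMod N → ZMod N → ℝ) (i j : ZMod N) : ℝ :=
  (v (i + 1) j - v i j) / gridh N

/-- Forward difference in the second direction. -/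
def D2 {N : ℕ} (v : ZMod N → ZMod N → ℝ) (i j : ZMod N) : ℝ :=
  (v i (j + 1) - v i j) / gridh N

/-- `[∇_h v]_{i,j} ∈ ℝ⁴`. -/
def nablah {N : ℕ} (v : ZMod N → ZMod N → ℝ) (i j : ZMod N) : Fin 4 → ℝ :=
  ![D1 v i j, D1 v (i - 1) j, D2 v i j, D2 v i (j - 1)]

/-- The five-point discrete Laplacian. -/
def laph {N : ℕ} (v : ZMod N → ZMod N → ℝ) (i j : ZMod N) : ℝ :=
  -(4 * v i j - v (i + 1) j - v (i - 1) j - v i (j + 1) - v i (j - 1)) / (gridh N) ^ 2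

/-- Scalar product on ℝ⁴. -/
def dot4 (p q : Fin 4 → ℝ) : ℝ := p 0 * q 0 + p 1 * q 1 + p 2 * q 2 + p 3 * q 3

/-- Euclidean norm on ℝ⁴. -/
def norm4 (p : Fin 4 → ℝ) : ℝ := Real.sqrt (dot4 p p)

/-- The discrete transport operator `𝒯_{i,j}(u,m)`. -/
def Transp {N : ℕ} (gq : Torus → (Fin 4 → ℝ) → (Fin 4 → ℝ))
    (u m : ZMod N → ZMod N → ℝ) (i j : ZMod N) : ℝ :=
  (1 / gridh N) *
    ((m i j * gq (gridPt N i j) (nablah u i j) 0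
        - m (i - 1) j * gq (gridPt N (i - 1) j) (nablah u (i - 1) j) 0
        + m (i + 1) j * gq (gridPt N (i + 1) j) (nablah u (i + 1) j) 1
        - m i j * gq (gridPt N i j) (nablah u i j) 1)
      + (m i j * gq (gridPt N i j) (nablah u i j) 2
        - m i (j - 1) * gq (gridPt N i (j - 1)) (nablah u i (j - 1)) 2
        + m i (j + 1) * gq (gridPt N i (j + 1)) (nablah u i (j + 1)) 3
        - m i j * gq (gridPt N i j) (nablah u i j) 3))

/-- Membership in the set `𝒦_h` of discrete probability densities. -/
def inKh {N : ℕ} [NeZero N] (m : ZMod N → ZMod N → ℝ) : Prop :=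
  (∀ i j, 0 ≤ m i j) ∧ (gridh N) ^ 2 * ∑ i, ∑ j, m i j = 1

/-- (g1): monotonicity of the numerical Hamiltonian. -/
def Hg1 (g : Torus → (Fin 4 → ℝ) → ℝ) : Prop :=
  ∀ x (q : Fin 4 → ℝ) (s t : ℝ), s ≤ t →
    g x (Function.update q 0 t) ≤ g x (Function.update q 0 s) ∧
    g x (Function.update q 2 t) ≤ g x (Function.update q 2 s) ∧
    g x (Function.update q 1 s) ≤ g x (Function.update q 1 t) ∧
    g x (Function.update q 3 s) ≤ g x (Function.update q 3 t)

/-- (g2): consistency with the Hamiltonian `H`. -/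
def Hg2 (g : Torus → (Fin 4 → ℝ) → ℝ) (H : Torus → ℝ × ℝ → ℝ) : Prop :=
  ∀ x (q1 q2 : ℝ), g x ![q1, q1, q2, q2] = H x (q1, q2)

/-- (g3): regularity; `g` is continuous and C¹ w.r.t. `q`, with `q`-gradient `gq`. -/
def Hg3 (g : Torus → (Fin 4 → ℝ) → ℝ) (gq : Torus → (Fin 4 → ℝ) → (Fin 4 → ℝ)) : Prop :=
  Continuous (fun p : Torus × (Fin 4 → ℝ) => g p.1 p.2) ∧
  (∀ x, ContDiff ℝ 1 (g x)) ∧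
  (∀ x (q : Fin 4 → ℝ) (i : Fin 4),
      HasDerivAt (fun t => g x (Function.update q i t)) (gq x q i) (q i))

/-- (g4): convexity of `q ↦ g(x,q)`. -/
def Hg4 (g : Torus → (Fin 4 → ℝ) → ℝ) : Prop :=
  ∀ x, ConvexOn ℝ Set.univ (g x)

/-- (g5): the growth conditions. -/
def Hg5 (g : Torus → (Fin 4 → ℝ) → ℝ) (gq : Torus → (Fin 4 → ℝ) → (Fin 4 → ℝ)) : Prop :=
  ∃ c1 c2 c3 c4 : ℝ, 0 < c1 ∧ 0 < c2 ∧ 0 < c3 ∧ 0 < c4 ∧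
    ∀ x q, c1 * (norm4 (gq x q)) ^ 2 - c2 ≤ dot4 (gq x q) q - g x q ∧
      norm4 (gq x q) ≤ c3 * norm4 q + c4

/-- The discrete Bellman equations. -/
def BellmanEq {N : ℕ} (g : Torus → (Fin 4 → ℝ) → ℝ) (ν Δt : ℝ) (F : ℝ → ℝ)
    (u m : ℕ → ZMod N → ZMod N → ℝ) (NT : ℕ) : Prop :=
  ∀ k < NT, ∀ i j, (u (k + 1) i j - u k i j) / Δt - ν * laph (u (k + 1)) i j
    + g (gridPt N i j) (nablah (u (k + 1)) i j) = F (m k i j)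

/-- The discrete Fokker–Planck equations. -/
def FPEq {N : ℕ} (gq : Torus → (Fin 4 → ℝ) → (Fin 4 → ℝ)) (ν Δt : ℝ)
    (u m : ℕ → ZMod N → ZMod N → ℝ) (NT : ℕ) : Prop :=
  ∀ k < NT, ∀ i j, (m (k + 1) i j - m k i j) / Δt + ν * laph (m k) i j
    + Transp gq (u (k + 1)) (m k) i j = 0



private lemma deriv_nonpos_of_anti {f : ℝ → ℝ} {f' x : ℝ} (hd : HasDerivAt f f' x)
    (hf : ∀ s t : ℝ, s ≤ t → f t ≤ f s) : f' ≤ 0 := by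
  refine le_of_tendsto (hasDerivAt_iff_tendsto_slope.mp hd) ?_
  filter_upwards [self_mem_nhdsWithin] with y hy
  have hy' : y ≠ x := hy
  rw [slope_def_field]
  rcases lt_or_gt_of_ne hy' with h1 | h1
  · exact div_nonpos_iff.mpr (Or.inl ⟨by linarith [hf y x h1.le], by linarith⟩)
  · exact div_nonpos_iff.mpr (Or.inr ⟨by linarith [hf x y h1.le], by linarith⟩)

private lemma deriv_nonneg_of_mono {f : ℝ → ℝ} {f' x : ℝ} (hd : HasDerivAt f f' x)
    (hf : ∀ s t : ℝ, s ≤ t → f s ≤ f t) : 0 ≤ f' := by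
  refine ge_of_tendsto (hasDerivAt_iff_tendsto_slope.mp hd) ?_
  filter_upwards [self_mem_nhdsWithin] with y hy
  have hy' : y ≠ x := hy
  rw [slope_def_field]
  rcases lt_or_gt_of_ne hy' with h1 | h1
  · exact div_nonneg_iff.mpr (Or.inr ⟨by linarith [hf y x h1.le], by linarith⟩)
  · exact div_nonneg (by linarith [hf x y h1.le]) (by linarith)

private lemma young_key (η M ψp p q : ℝ) (hη : 0 < η) (hM : 0 ≤ M) (hp : 0 ≤ p)
    (hq : 0 < q) (hpq : p ≤ ψp * q) :
    M * p ≤ η / 2 * (p * q) + 1 / (2 * η) * (M ^ 2 * ψp) := by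
  have h1 : 0 ≤ p * (η * q - M) ^ 2 := mul_nonneg hp (sq_nonneg _)
  have h2 : M ^ 2 * p ≤ M ^ 2 * (ψp * q) := mul_le_mul_of_nonneg_left hpq (sq_nonneg M)
  have hq2 : (0:ℝ) < 2 * η * q := by positivity
  rw [← mul_le_mul_iff_right₀ hq2]
  have e : 2 * η * q * (η / 2 * (p * q) + 1 / (2 * η) * (M ^ 2 * ψp))
      = η ^ 2 * (p * q ^ 2) + M ^ 2 * (ψp * q) := by
    field_simp
  rw [e]
  nlinarith [h1, h2]

private lemma sum_shift_i {N : ℕ} [NeZero N] (F : ZMod N → ZMod N → ℝ) :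
    ∑ i : ZMod N, ∑ j : ZMod N, F (i - 1) j = ∑ i : ZMod N, ∑ j : ZMod N, F i j :=
  Fintype.sum_equiv (Equiv.subRight (1 : ZMod N)) _ _ fun _ => rfl

private lemma sum_shift_i' {N : ℕ} [NeZero N] (F : ZMod N → ZMod N → ℝ) :
    ∑ i : ZMod N, ∑ j : ZMod N, F (i + 1) j = ∑ i : ZMod N, ∑ j : ZMod N, F i j :=
  Fintype.sum_equiv (Equiv.addRight (1 : ZMod N)) _ _ fun _ => rfl

private lemma sum_shift_j {N : ℕ} [NeZero N] (F : ZMod N → ZMod N → ℝ) :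
    ∑ i : ZMod N, ∑ j : ZMod N, F i (j - 1) = ∑ i : ZMod N, ∑ j : ZMod N, F i j :=
  Finset.sum_congr rfl fun i _ =>
    Fintype.sum_equiv (Equiv.subRight (1 : ZMod N)) _ _ fun _ => rfl

private lemma sum_shift_j' {N : ℕ} [NeZero N] (F : ZMod N → ZMod N → ℝ) :
    ∑ i : ZMod N, ∑ j : ZMod N, F i (j + 1) = ∑ i : ZMod N, ∑ j : ZMod N, F i j :=
  Finset.sum_congr rfl fun i _ =>
    Fintype.sum_equiv (Equiv.addRight (1 : ZMod N)) _ _ fun _ => rfl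

private lemma comp_bound (ψ ψ' : ℝ → ℝ)
    (hmono : ∀ s t : ℝ, 0 < s → s ≤ t → ψ s ≤ ψ t)
    (htan : ∀ s t : ℝ, 0 < s → s < t → ψ t - ψ s ≤ ψ' s * (t - s))
    (h η M a b : ℝ) (hh : 0 < h) (hη : 0 < η) (hM : 0 ≤ M)
    (ha : 0 < a) (hb : 0 < b) :
    M * ((ψ b - ψ a) / h) ≤ η / 2 * (((ψ b - ψ a) / h) * ((b - a) / h))
      + 1 / (2 * η) * (M ^ 2 * ψ' a * (if a < b then 1 else 0)) := by
  rcases lt_or_ge a b with hab | hab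
  · rw [if_pos hab, mul_one]
    have hp : 0 ≤ (ψ b - ψ a) / h :=
      div_nonneg (by linarith [hmono a b ha hab.le]) hh.le
    have hq : 0 < (b - a) / h := div_pos (by linarith) hh
    have hpq : (ψ b - ψ a) / h ≤ ψ' a * ((b - a) / h) := by
      rw [← mul_div_assoc]
      gcongr
      exact htan a b ha hab
    exact young_key η M (ψ' a) _ _ hη hM hp hq hpq
  · have hp : (ψ b - ψ a) / h ≤ 0 :=
      div_nonpos_iff.mpr (Or.inr ⟨by linarith [hmono b a hb hab], by linarith⟩)
    have hq : (b - a) / h ≤ 0 :=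
      div_nonpos_iff.mpr (Or.inr ⟨by linarith, by linarith⟩)
    rw [if_neg (not_lt.mpr hab), mul_zero, mul_zero, add_zero]
    nlinarith [mul_nonneg hM (neg_nonneg.mpr hp),
      mul_nonneg (neg_nonneg.mpr hp) (neg_nonneg.mpr hq), hη.le]

/-- Estimate on `Σ 𝒯_{i,j}(v,m) ψ(m_{i,j})` for concave nondecreasing `ψ`. -/
theorem transport_psi_estimate (N : ℕ) [NeZero N]
    (g : Torus → (Fin 4 → ℝ) → ℝ) (gq : Torus → (Fin 4 → ℝ) → (Fin 4 → ℝ))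
    (hg1 : Hg1 g) (hg3 : Hg3 g gq)
    (ψ ψ' : ℝ → ℝ)
    (hψmono : ∀ s t : ℝ, 0 < s → s ≤ t → ψ s ≤ ψ t)
    (hψconc : ConcaveOn ℝ (Set.Ioi 0) ψ)
    (hψderiv : ∀ s : ℝ, 0 < s → HasDerivAt ψ (ψ' s) s)
    (v m : ZMod N → ZMod N → ℝ) (hm : ∀ i j, 0 < m i j)
    (η : ℝ) (hη : 0 < η) :
    ∑ i, ∑ j, Transp gq v m i j * ψ (m i j)
      ≤ (η / 2) * ∑ i, ∑ j,
          dot4 (nablah (fun a b => ψ (m a b)) i j) (nablah m i j)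
        + (1 / (2 * η)) * ∑ i, ∑ j, (m i j) ^ 2 * ψ' (m i j) *
            ((gq (gridPt N i j) (nablah v i j) 0) ^ 2
                * (if m i j < m (i + 1) j then 1 else 0)
              + (gq (gridPt N i j) (nablah v i j) 1) ^ 2
                * (if m i j < m (i - 1) j then 1 else 0)
              + (gq (gridPt N i j) (nablah v i j) 2) ^ 2
                * (if m i j < m i (j + 1) then 1 else 0)
              + (gq (gridPt N i j) (nablah v i j) 3) ^ 2
                * (if m i j < m i (j - 1) then 1 else 0)) := by
  have hh : 0 < gridh N := by
    have hN : (0:ℝ) < N := by exact_mod_cast Nat.pos_of_ne_zero (NeZero.ne N)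
    rw [gridh]; positivity
  -- tangent line estimate from concavity
  have htan : ∀ s t : ℝ, 0 < s → s < t → ψ t - ψ s ≤ ψ' s * (t - s) := by
    intro s t hs hst
    have hsl := hψconc.slope_le_of_hasDerivAt (Set.mem_Ioi.mpr hs)
      (Set.mem_Ioi.mpr (hs.trans hst)) hst (hψderiv s hs)
    rw [slope_def_field] at hsl
    have ht : (0:ℝ) < t - s := by linarith
    have h2 := mul_le_mul_of_nonneg_right hsl ht.le
    rwa [div_mul_cancel₀ _ ht.ne'] at h2
  -- signs of the components of gq
  have s0 : ∀ x q, gq x q 0 ≤ 0 := fun x q =>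
    deriv_nonpos_of_anti (hg3.2.2 x q 0) fun s t hst => (hg1 x q s t hst).1
  have s2 : ∀ x q, gq x q 2 ≤ 0 := fun x q =>
    deriv_nonpos_of_anti (hg3.2.2 x q 2) fun s t hst => (hg1 x q s t hst).2.1
  have s1 : ∀ x q, 0 ≤ gq x q 1 := fun x q =>
    deriv_nonneg_of_mono (hg3.2.2 x q 1) fun s t hst => (hg1 x q s t hst).2.2.1
  have s3 : ∀ x q, 0 ≤ gq x q 3 := fun x q =>
    deriv_nonneg_of_mono (hg3.2.2 x q 3) fun s t hst => (hg1 x q s t hst).2.2.2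
  -- Step 1 : summation by parts
  have sumEq : ∑ i, ∑ j, Transp gq v m i j * ψ (m i j)
      = ∑ i, ∑ j, -(m i j) * dot4 (gq (gridPt N i j) (nablah v i j))
          (nablah (fun a b => ψ (m a b)) i j) := by
    have pointwise : ∀ i j : ZMod N, Transp gq v m i j * ψ (m i j)
        = -(m i j) * dot4 (gq (gridPt N i j) (nablah v i j))
            (nablah (fun a b => ψ (m a b)) i j)
          + ((1 / gridh N) * (m i j * gq (gridPt N i j) (nablah v i j) 0 * ψ (m (i + 1) j))
            - (1 / gridh N) * (m (i - 1) j * gq (gridPt N (i - 1) j) (nablah v (i - 1) j) 0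
                * ψ (m i j)))
          + ((1 / gridh N) * (m (i + 1) j * gq (gridPt N (i + 1) j) (nablah v (i + 1) j) 1
                * ψ (m i j))
            - (1 / gridh N) * (m i j * gq (gridPt N i j) (nablah v i j) 1 * ψ (m (i - 1) j)))
          + ((1 / gridh N) * (m i j * gq (gridPt N i j) (nablah v i j) 2 * ψ (m i (j + 1)))
            - (1 / gridh N) * (m i (j - 1) * gq (gridPt N i (j - 1)) (nablah v i (j - 1)) 2
                * ψ (m i j)))
          + ((1 / gridh N) * (m i (j + 1) * gq (gridPt N i (j + 1)) (nablah v i (j + 1)) 3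
                * ψ (m i j))
            - (1 / gridh N) * (m i j * gq (gridPt N i j) (nablah v i j) 3 * ψ (m i (j - 1)))) := by
      intro i j
      simp only [Transp, dot4, nablah, D1, D2, Matrix.cons_val_zero, Matrix.cons_val_one,
        Matrix.head_cons, Matrix.cons_val_two, Matrix.tail_cons, Matrix.cons_val_three,
        sub_add_cancel]
      ring
    have hx1 : ∑ i : ZMod N, ∑ j : ZMod N,
        (1 / gridh N) * (m (i - 1) j * gq (gridPt N (i - 1) j) (nablah v (i - 1) j) 0
            * ψ (m i j))
        = ∑ i : ZMod N, ∑ j : ZMod N,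
        (1 / gridh N) * (m i j * gq (gridPt N i j) (nablah v i j) 0 * ψ (m (i + 1) j)) := by
      have := sum_shift_i (fun i j => (1 / gridh N) *
        (m i j * gq (gridPt N i j) (nablah v i j) 0 * ψ (m (i + 1) j)))
      simpa only [sub_add_cancel] using this
    have hx2 : ∑ i : ZMod N, ∑ j : ZMod N,
        (1 / gridh N) * (m i j * gq (gridPt N i j) (nablah v i j) 1 * ψ (m (i - 1) j))
        = ∑ i : ZMod N, ∑ j : ZMod N,
        (1 / gridh N) * (m (i + 1) j * gq (gridPt N (i + 1) j) (nablah v (i + 1) j) 1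
            * ψ (m i j)) := by
      have := sum_shift_i' (fun i j => (1 / gridh N) *
        (m i j * gq (gridPt N i j) (nablah v i j) 1 * ψ (m (i - 1) j)))
      simpa only [add_sub_cancel_right] using this.symm
    have hx3 : ∑ i : ZMod N, ∑ j : ZMod N,
        (1 / gridh N) * (m i (j - 1) * gq (gridPt N i (j - 1)) (nablah v i (j - 1)) 2
            * ψ (m i j))
        = ∑ i : ZMod N, ∑ j : ZMod N,
        (1 / gridh N) * (m i j * gq (gridPt N i j) (nablah v i j) 2 * ψ (m i (j + 1))) := by
      have := sum_shift_j (fun i j => (1 / gridh N) *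
        (m i j * gq (gridPt N i j) (nablah v i j) 2 * ψ (m i (j + 1))))
      simpa only [sub_add_cancel] using this
    have hx4 : ∑ i : ZMod N, ∑ j : ZMod N,
        (1 / gridh N) * (m i j * gq (gridPt N i j) (nablah v i j) 3 * ψ (m i (j - 1)))
        = ∑ i : ZMod N, ∑ j : ZMod N,
        (1 / gridh N) * (m i (j + 1) * gq (gridPt N i (j + 1)) (nablah v i (j + 1)) 3
            * ψ (m i j)) := by
      have := sum_shift_j' (fun i j => (1 / gridh N) *
        (m i j * gq (gridPt N i j) (nablah v i j) 3 * ψ (m i (j - 1))))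
      simpa only [add_sub_cancel_right] using this.symm
    calc ∑ i, ∑ j, Transp gq v m i j * ψ (m i j)
        = ∑ i : ZMod N, ∑ j : ZMod N,
            (-(m i j) * dot4 (gq (gridPt N i j) (nablah v i j))
              (nablah (fun a b => ψ (m a b)) i j)
            + ((1 / gridh N) * (m i j * gq (gridPt N i j) (nablah v i j) 0 * ψ (m (i + 1) j))
              - (1 / gridh N) * (m (i - 1) j * gq (gridPt N (i - 1) j) (nablah v (i - 1) j) 0
                  * ψ (m i j)))
            + ((1 / gridh N) * (m (i + 1) j * gq (gridPt N (i + 1) j) (nablah v (i + 1) j) 1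
                  * ψ (m i j))
              - (1 / gridh N) * (m i j * gq (gridPt N i j) (nablah v i j) 1 * ψ (m (i - 1) j)))
            + ((1 / gridh N) * (m i j * gq (gridPt N i j) (nablah v i j) 2 * ψ (m i (j + 1)))
              - (1 / gridh N) * (m i (j - 1) * gq (gridPt N i (j - 1)) (nablah v i (j - 1)) 2
                  * ψ (m i j)))
            + ((1 / gridh N) * (m i (j + 1) * gq (gridPt N i (j + 1)) (nablah v i (j + 1)) 3
                  * ψ (m i j))
              - (1 / gridh N) * (m i j * gq (gridPt N i j) (nablah v i j) 3 * ψ (m i (j - 1)))))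
          := Finset.sum_congr rfl fun i _ => Finset.sum_congr rfl fun j _ => pointwise i j
      _ = ∑ i, ∑ j, -(m i j) * dot4 (gq (gridPt N i j) (nablah v i j))
            (nablah (fun a b => ψ (m a b)) i j) := by
          simp only [Finset.sum_add_distrib, Finset.sum_sub_distrib]
          rw [hx1, hx2, hx3, hx4]
          ring
  rw [sumEq]
  -- Step 2 : pointwise bound
  have bound : ∀ i j : ZMod N,
      -(m i j) * dot4 (gq (gridPt N i j) (nablah v i j))
          (nablah (fun a b => ψ (m a b)) i j)
      ≤ η / 2 * dot4 (nablah (fun a b => ψ (m a b)) i j) (nablah m i j)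
        + 1 / (2 * η) * ((m i j) ^ 2 * ψ' (m i j) *
            ((gq (gridPt N i j) (nablah v i j) 0) ^ 2
                * (if m i j < m (i + 1) j then 1 else 0)
              + (gq (gridPt N i j) (nablah v i j) 1) ^ 2
                * (if m i j < m (i - 1) j then 1 else 0)
              + (gq (gridPt N i j) (nablah v i j) 2) ^ 2
                * (if m i j < m i (j + 1) then 1 else 0)
              + (gq (gridPt N i j) (nablah v i j) 3) ^ 2
                * (if m i j < m i (j - 1) then 1 else 0))) := by
    intro i j
    set G : Fin 4 → ℝ := gq (gridPt N i j) (nablah v i j) with hG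
    have c0 := comp_bound ψ ψ' hψmono htan (gridh N) η (m i j * (-(G 0))) (m i j) (m (i + 1) j)
      hh hη (mul_nonneg (hm i j).le (neg_nonneg.mpr (s0 _ _))) (hm i j) (hm (i + 1) j)
    have c1 := comp_bound ψ ψ' hψmono htan (gridh N) η (m i j * G 1) (m i j) (m (i - 1) j)
      hh hη (mul_nonneg (hm i j).le (s1 _ _)) (hm i j) (hm (i - 1) j)
    have c2 := comp_bound ψ ψ' hψmono htan (gridh N) η (m i j * (-(G 2))) (m i j) (m i (j + 1))
      hh hη (mul_nonneg (hm i j).le (neg_nonneg.mpr (s2 _ _))) (hm i j) (hm i (j + 1))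
    have c3 := comp_bound ψ ψ' hψmono htan (gridh N) η (m i j * G 3) (m i j) (m i (j - 1))
      hh hη (mul_nonneg (hm i j).le (s3 _ _)) (hm i j) (hm i (j - 1))
    simp only [dot4, nablah, D1, D2, Matrix.cons_val_zero, Matrix.cons_val_one,
      Matrix.head_cons, Matrix.cons_val_two, Matrix.tail_cons, Matrix.cons_val_three,
      sub_add_cancel]
    have sumup := add_le_add (add_le_add (add_le_add c0 c1) c2) c3
    refine le_trans (le_of_eq ?_) (le_trans sumup (le_of_eq ?_)) <;> ring
  calc ∑ i, ∑ j, -(m i j) * dot4 (gq (gridPt N i j) (nablah v i j))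
          (nablah (fun a b => ψ (m a b)) i j)
      ≤ ∑ i : ZMod N, ∑ j : ZMod N,
          (η / 2 * dot4 (nablah (fun a b => ψ (m a b)) i j) (nablah m i j)
          + 1 / (2 * η) * ((m i j) ^ 2 * ψ' (m i j) *
            ((gq (gridPt N i j) (nablah v i j) 0) ^ 2
                * (if m i j < m (i + 1) j then 1 else 0)
              + (gq (gridPt N i j) (nablah v i j) 1) ^ 2
                * (if m i j < m (i - 1) j then 1 else 0)
              + (gq (gridPt N i j) (nablah v i j) 2) ^ 2
                * (if m i j < m i (j + 1) then 1 else 0)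
              + (gq (gridPt N i j) (nablah v i j) 3) ^ 2
                * (if m i j < m i (j - 1) then 1 else 0)))) :=
        Finset.sum_le_sum fun i _ => Finset.sum_le_sum fun j _ => bound i j
    _ = (η / 2) * ∑ i, ∑ j,
          dot4 (nablah (fun a b => ψ (m a b)) i j) (nablah m i j)
        + (1 / (2 * η)) * ∑ i, ∑ j, (m i j) ^ 2 * ψ' (m i j) *
            ((gq (gridPt N i j) (nablah v i j) 0) ^ 2
                * (if m i j < m (i + 1) j then 1 else 0)
              + (gq (gridPt N i j) (nablah v i j) 1) ^ 2
                * (if m i j < m (i - 1) j then 1 else 0)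
              + (gq (gridPt N i j) (nablah v i j) 2) ^ 2
                * (if m i j < m i (j + 1) then 1 else 0)
              + (gq (gridPt N i j) (nablah v i j) 3) ^ 2
                * (if m i j < m i (j - 1) then 1 else 0)) := by
        simp only [Finset.sum_add_distrib, Finset.mul_sum]

end
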